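/- There exists a formal power series h(x) = x + Σ_{j≥2} h_j x^j with coefficients in K such that h(f(x)) = λ·h(x) as formal power series, and moreover |h_j| ≤ |λ|^{1−j} for all j ≥ 1. -/

import Mathlib

/-- Formal composition `h ∘ f` of one-variable power series; it agrees with
substitution of `f` into `h` when `f` has zero constant term (in that case
`coeff N (f ^ j) = 0` for `j > N`, so the sum below is the full sum). -/
noncomputable def PowerSeries.formalComp {K : Type*} [CommRing K]
    (h f : PowerSeries K) : PowerSeries K :=
  PowerSeries.mk fun N =>
    ∑ j ∈ Finset.range (N + 1), PowerSeries.coeff j h * PowerSeries.coeff N (f ^ j)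


lemma pow_coeff_bound {K : Type*} [NontriviallyNormedField K] [IsUltrametricDist K]
    (f : PowerSeries K) (hf : ∀ i, ‖PowerSeries.coeff i f‖ ≤ 1) :
    ∀ j N, ‖PowerSeries.coeff N (f ^ j)‖ ≤ 1 := by
  intro j
  induction j with
  | zero => intro N; simp [PowerSeries.coeff_one]; split <;> simp
  | succ j ih =>
    intro N
    rw [pow_succ, PowerSeries.coeff_mul]
    refine IsUltrametricDist.norm_sum_le_of_forall_le_of_nonneg zero_le_one ?_
    intro p _
    calc ‖PowerSeries.coeff p.1 (f ^ j) * PowerSeries.coeff p.2 f‖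
        ≤ ‖PowerSeries.coeff p.1 (f ^ j)‖ * ‖PowerSeries.coeff p.2 f‖ := norm_mul_le _ _
      _ ≤ 1 * 1 := mul_le_mul (ih p.1) (hf p.2) (norm_nonneg _) zero_le_one
      _ = 1 := by ring

lemma pow_coeff_zero {K : Type*} [CommRing K] (f : PowerSeries K)
    (hf0 : PowerSeries.coeff 0 f = 0) {j N : ℕ} (h : N < j) :
    PowerSeries.coeff N (f ^ j) = 0 := by
  have hX : (PowerSeries.X : PowerSeries K) ∣ f := by
    rw [PowerSeries.X_dvd_iff, ← PowerSeries.coeff_zero_eq_constantCoeff_apply]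
    exact hf0
  exact (PowerSeries.X_pow_dvd_iff.mp (pow_dvd_pow_of_dvd hX j)) N h

lemma pow_coeff_diag {K : Type*} [CommRing K] (f : PowerSeries K)
    (hf0 : PowerSeries.coeff 0 f = 0) :
    ∀ j, PowerSeries.coeff j (f ^ j) = (PowerSeries.coeff 1 f) ^ j := by
  intro j
  induction j with
  | zero => simp
  | succ j ih =>
    rw [pow_succ, PowerSeries.coeff_mul]
    rw [Finset.sum_eq_single (j, 1)]
    · rw [ih, pow_succ]
    · rintro ⟨a, b⟩ hab hne
      rw [Finset.HasAntidiagonal.mem_antidiagonal] at hab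
      simp only [Prod.mk.injEq, ne_eq, not_and] at hne
      rcases Nat.eq_zero_or_pos b with hb0 | hb0
      · rw [hb0, hf0, mul_zero]
      · have hne' : ¬(a = j ∧ b = 1) := by rintro ⟨h1, h2⟩; exact hne h1 h2
        have ha : a < j := by omega
        rw [pow_coeff_zero f hf0 ha, zero_mul]
    · intro hmem; exact absurd (by simp : (j, 1) ∈ Finset.HasAntidiagonal.antidiagonal (j+1)) hmem

noncomputable def hcoef {K : Type*} [NontriviallyNormedField K] (f : PowerSeries K) : ℕ → K
  | 0 => 0
  | 1 => 1
  | (N + 2) =>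
      (∑ j ∈ (Finset.range (N + 2)).attach,
        hcoef f j * PowerSeries.coeff (N + 2) (f ^ (j : ℕ))) /
      (PowerSeries.coeff 1 f - (PowerSeries.coeff 1 f) ^ (N + 2))
  termination_by N => N
  decreasing_by exact Finset.mem_range.mp j.2

lemma hcoef_rec {K : Type*} [NontriviallyNormedField K] (f : PowerSeries K) (N : ℕ) :
    hcoef f (N + 2) =
      (∑ j ∈ Finset.range (N + 2),
        hcoef f j * PowerSeries.coeff (N + 2) (f ^ j)) /
      (PowerSeries.coeff 1 f - (PowerSeries.coeff 1 f) ^ (N + 2)) := by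
  rw [hcoef, ← Finset.sum_attach (Finset.range (N+2)) (fun j => hcoef f j * PowerSeries.coeff (N + 2) (f ^ j))]

lemma norm_lam_sub_pow {K : Type*} [NontriviallyNormedField K] [IsUltrametricDist K]
    {l : K} (h1 : ‖l‖ < 1) {N : ℕ} (hN : 2 ≤ N) :
    ‖l - l ^ N‖ = ‖l‖ := by
  rcases eq_or_lt_of_le (norm_nonneg l) with h0 | h0
  · have : l = 0 := by simpa using h0.symm
    simp [this, zero_pow (by omega : N ≠ 0)]
  have hlt : ‖l ^ N‖ < ‖l‖ := by
    rw [norm_pow]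
    calc ‖l‖ ^ N ≤ ‖l‖ ^ 2 := pow_le_pow_of_le_one (le_of_lt h0) h1.le hN
      _ < ‖l‖ := by nlinarith
  rw [sub_eq_add_neg, IsUltrametricDist.norm_add_eq_max_of_norm_ne_norm (by rw [norm_neg]; exact ne_of_gt hlt), norm_neg]
  exact max_eq_left hlt.le

lemma hcoef_bound {K : Type*} [NontriviallyNormedField K] [IsUltrametricDist K]
    (f : PowerSeries K) (hf : ∀ i, ‖PowerSeries.coeff i f‖ ≤ 1)
    (hlam0 : 0 < ‖PowerSeries.coeff 1 f‖) (hlam1 : ‖PowerSeries.coeff 1 f‖ < 1) :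
    ∀ N : ℕ, 1 ≤ N → ‖hcoef f N‖ ≤ ‖PowerSeries.coeff 1 f‖ ^ (1 - (N : ℤ)) := by
  set l := PowerSeries.coeff 1 f with hl
  intro N
  induction N using Nat.strong_induction_on with
  | _ N ih =>
    match N with
    | 0 => omega
    | 1 => intro _; simp [hcoef]
    | (M + 2) =>
      intro _
      rw [hcoef_rec]
      have hden : ‖l - l ^ (M + 2)‖ = ‖l‖ := norm_lam_sub_pow hlam1 (by omega)
      have hnum : ‖∑ j ∈ Finset.range (M + 2),
          hcoef f j * PowerSeries.coeff (M + 2) (f ^ j)‖ ≤ ‖l‖ ^ (-(M : ℤ)) := by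
        refine IsUltrametricDist.norm_sum_le_of_forall_le_of_nonneg
          (zpow_nonneg hlam0.le _) ?_
        intro j hj
        rw [Finset.mem_range] at hj
        rcases Nat.eq_zero_or_pos j with hj0 | hj0
        · subst hj0; simp only [hcoef, zero_mul, norm_zero]; positivity
        · calc ‖hcoef f j * PowerSeries.coeff (M + 2) (f ^ j)‖
              ≤ ‖hcoef f j‖ * ‖PowerSeries.coeff (M + 2) (f ^ j)‖ := norm_mul_le _ _
            _ ≤ ‖l‖ ^ (1 - (j : ℤ)) * 1 :=
                mul_le_mul (ih j (by omega) hj0) (pow_coeff_bound f hf _ _)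
                  (norm_nonneg _) (zpow_nonneg hlam0.le _)
            _ = ‖l‖ ^ (1 - (j : ℤ)) := mul_one _
            _ ≤ ‖l‖ ^ (-(M : ℤ)) :=
                zpow_le_zpow_right_of_le_one₀ hlam0 hlam1.le (by omega)
      rw [norm_div, hden]
      calc _ ≤ ‖l‖ ^ (-(M : ℤ)) / ‖l‖ := by gcongr
        _ = ‖l‖ ^ (1 - ((M + 2 : ℕ) : ℤ)) := by
              rw [show (1 - ((M + 2 : ℕ) : ℤ)) = -(M : ℤ) + (-1) by push_cast; ring,
                zpow_add₀ (ne_of_gt hlam0), zpow_neg_one, div_eq_mul_inv]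

lemma hcoef_funceq {K : Type*} [NontriviallyNormedField K] [IsUltrametricDist K]
    (f : PowerSeries K) (hf0 : PowerSeries.coeff 0 f = 0)
    (hlam0 : 0 < ‖PowerSeries.coeff 1 f‖) (hlam1 : ‖PowerSeries.coeff 1 f‖ < 1) :
    ∀ N : ℕ, ∑ j ∈ Finset.range (N + 1), hcoef f j * PowerSeries.coeff N (f ^ j)
      = PowerSeries.coeff 1 f * hcoef f N := by
  intro N
  match N with
  | 0 => simp [hcoef]
  | 1 =>
    rw [Finset.sum_range_succ, Finset.sum_range_one]
    simp [hcoef]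
  | (M + 2) =>
    have hdne : PowerSeries.coeff 1 f - (PowerSeries.coeff 1 f) ^ (M + 2) ≠ 0 := by
      intro h
      have := norm_lam_sub_pow hlam1 (by omega : 2 ≤ M + 2)
      rw [h, norm_zero] at this
      exact absurd this.symm (ne_of_gt hlam0)
    have hS : ∑ j ∈ Finset.range (M + 2), hcoef f j * PowerSeries.coeff (M + 2) (f ^ j)
        = hcoef f (M + 2) * (PowerSeries.coeff 1 f - (PowerSeries.coeff 1 f) ^ (M + 2)) := by
      rw [hcoef_rec, div_mul_cancel₀ _ hdne]
    rw [Finset.sum_range_succ, hS, pow_coeff_diag f hf0]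
    ring

/-- formal Koenigs linearization with coefficient bounds:
for `f(x) = ∑_{i≥1} f_i x^i` with all `‖f_i‖ ≤ 1`, `λ = f₁`, `0 < ‖λ‖ < 1`,
there is a formal power series `h(x) = x + ∑_{j≥2} h_j x^j` with
`h(f(x)) = λ·h(x)` and `‖h_j‖ ≤ ‖λ‖^(1−j)` for all `j ≥ 1`. -/
theorem exists_formal_koenigs_linearization
    {K : Type*} [NontriviallyNormedField K] [IsUltrametricDist K] [CompleteSpace K]
    (f : PowerSeries K) (hf0 : PowerSeries.coeff 0 f = 0)
    (hf : ∀ i, ‖PowerSeries.coeff i f‖ ≤ 1)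
    (hlam0 : 0 < ‖PowerSeries.coeff 1 f‖) (hlam1 : ‖PowerSeries.coeff 1 f‖ < 1) :
    ∃ h : PowerSeries K,
      PowerSeries.coeff 0 h = 0 ∧ PowerSeries.coeff 1 h = 1 ∧
      (∀ j : ℕ, 1 ≤ j → ‖PowerSeries.coeff j h‖ ≤ ‖PowerSeries.coeff 1 f‖ ^ (1 - (j : ℤ))) ∧
      PowerSeries.formalComp h f = PowerSeries.C (PowerSeries.coeff 1 f) * h := by
  refine ⟨PowerSeries.mk (hcoef f), ?_, ?_, ?_, ?_⟩
  · simp [hcoef]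
  · simp [hcoef]
  · intro j hj
    rw [PowerSeries.coeff_mk]
    exact hcoef_bound f hf hlam0 hlam1 j hj
  · ext N
    simp only [PowerSeries.formalComp, PowerSeries.coeff_mk, PowerSeries.coeff_C_mul]
    exact hcoef_funceq f hf0 hlam0 hlam1 N
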